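/- For every nonnegative integer n and every real x with 0 < x < 1, the series A_n(x) = Σ_{j=0}^∞ binom(n+j, j) · ((−1)^j (1/2)_j)/((2(n+j)+1)·j!) · x^j converges and A_n(x) = (1/(2·x^{n+1/2})) · ∫₀^x t^{n−1/2}·(1+t)^{−1/2} · F_n(t/(1+t)) dt, where F_n(y) = Σ_{m=0}^n ((−n)_m (1/2)_m / ((1)_m m!)) y^m. -/

import Mathlib

open Real Finset

/-- Pochhammer symbol `(a)_n = a (a+1) ⋯ (a+n-1)`. -/
noncomputable def poch (a : ℝ) (n : ℕ) : ℝ := ∏ i ∈ Finset.range n, (a + i)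

/-- Terminating Gauss hypergeometric function `₂F₁(-n, 1/2; 1; y)`. -/
noncomputable def F2F1 (n : ℕ) (y : ℝ) : ℝ :=
  ∑ m ∈ Finset.range (n + 1),
    poch (-(n : ℝ)) m * poch (1/2) m / (poch 1 m * (Nat.factorial m : ℝ)) * y ^ m

open Filter MeasureTheory intervalIntegral

lemma poch_zero (a : ℝ) : poch a 0 = 1 := by simp [poch]

lemma poch_succ (a : ℝ) (k : ℕ) : poch a (k+1) = poch a k * (a + k) := by
  simp [poch, Finset.prod_range_succ]

lemma poch_pos {a : ℝ} (ha : 0 < a) (k : ℕ) : 0 < poch a k := by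
  induction k with
  | zero => simp [poch_zero]
  | succ k ih => rw [poch_succ]; positivity

lemma poch_add (a : ℝ) (m k : ℕ) : poch a (m + k) = poch a m * poch (a + m) k := by
  simp only [poch, Finset.prod_range_add]
  congr 1
  refine Finset.prod_congr rfl fun i _ => ?_
  push_cast; ring

lemma poch_one (k : ℕ) : poch 1 k = k.factorial := by
  induction k with
  | zero => simp [poch_zero]
  | succ k ih => rw [poch_succ, ih, Nat.factorial_succ]; push_cast; ring

lemma poch_nonneg {a : ℝ} (h0 : 0 ≤ a) (k : ℕ) : 0 ≤ poch a k := by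
  induction k with
  | zero => simp [poch_zero]
  | succ k ih => rw [poch_succ]; exact mul_nonneg ih (by positivity)

lemma poch_le_poch {a b : ℝ} (h0 : 0 ≤ a) (hab : a ≤ b) (k : ℕ) : poch a k ≤ poch b k := by
  induction k with
  | zero => simp [poch_zero]
  | succ k ih =>
    rw [poch_succ, poch_succ]
    exact mul_le_mul ih (by linarith) (by positivity) (le_trans (poch_nonneg h0 k) ih)

lemma poch_cast_succ (n j : ℕ) : poch ((n:ℝ)+1) j * n.factorial = (n+j).factorial := by
  induction j with
  | zero => simp [poch_zero]
  | succ j ih =>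
    rw [poch_succ]
    have : poch ((n:ℝ)+1) j * ((n:ℝ)+1+j) * n.factorial
        = ((n:ℝ)+1+j) * (poch ((n:ℝ)+1) j * n.factorial) := by ring
    rw [this, ih, ← Nat.add_assoc, Nat.factorial_succ]
    push_cast; ring

lemma choose_eq_poch (n j : ℕ) :
    (Nat.choose (n + j) j : ℝ) = poch ((n:ℝ)+1) j / j.factorial := by
  have h2 : ((n+j).choose j : ℝ) * j.factorial * n.factorial = (n+j).factorial := by
    have := Nat.choose_mul_factorial_mul_factorial (Nat.le_add_left j n)
    rw [Nat.add_sub_cancel] at this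
    exact_mod_cast this
  rw [← poch_cast_succ] at h2
  have hj : (j.factorial : ℝ) ≠ 0 := Nat.cast_ne_zero.2 j.factorial_ne_zero
  have hn : (n.factorial : ℝ) ≠ 0 := Nat.cast_ne_zero.2 n.factorial_ne_zero
  have h3 : ((n+j).choose j : ℝ) * j.factorial = poch ((n:ℝ)+1) j :=
    mul_right_cancel₀ hn h2
  rw [eq_div_iff hj]; exact h3

lemma poch_neg_nat {n m : ℕ} (h : m ≤ n) :
    poch (-(n:ℝ)) m = (-1)^m * (n.choose m) * m.factorial := by
  induction m with
  | zero => simp [poch_zero]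
  | succ m ih =>
    have hm : m ≤ n := le_trans (Nat.le_succ m) h
    rw [poch_succ, ih hm]
    have hc : (n.choose (m+1) : ℝ) * (m+1) = n.choose m * ((n:ℝ) - m) := by
      have h2 : n.choose (m+1) * (m+1) = n.choose m * (n - m) := Nat.choose_succ_right_eq n m
      calc (n.choose (m+1) : ℝ) * (m+1) = ((n.choose (m+1) * (m+1) : ℕ) : ℝ) := by push_cast; ring
        _ = ((n.choose m * (n - m) : ℕ) : ℝ) := by rw [h2]
        _ = n.choose m * ((n:ℝ) - m) := by push_cast [Nat.cast_sub hm]; ring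
    rw [Nat.factorial_succ, pow_succ]
    push_cast
    linear_combination ((-1:ℝ))^m * m.factorial * hc

lemma vandermonde_real (n j : ℕ) :
    ∑ m ∈ Finset.range (n+1), (n.choose m : ℝ) * j.choose m = (n+j).choose j := by
  have h := Nat.add_choose_eq n j j
  rw [Finset.Nat.sum_antidiagonal_eq_sum_range_succ_mk] at h
  have h2 : ∑ m ∈ Finset.range (j+1), (n.choose m : ℝ) * j.choose m = (n+j).choose j := by
    rw [h]; push_cast
    refine Finset.sum_congr rfl fun m hm => ?_
    congr 1
    rw [Nat.choose_symm (Nat.lt_succ_iff.mp (Finset.mem_range.mp hm))]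
  have big : ∀ (N : ℕ), j + 1 ≤ N →
      ∑ m ∈ Finset.range N, (n.choose m : ℝ) * j.choose m
        = ∑ m ∈ Finset.range (j+1), (n.choose m : ℝ) * j.choose m := by
    intro N hN
    symm
    refine Finset.sum_subset (Finset.range_subset_range.2 hN) fun m _ hm => ?_
    have : j < m := by simpa using hm
    simp [Nat.choose_eq_zero_of_lt this]
  have big2 : ∀ (N : ℕ), n + 1 ≤ N →
      ∑ m ∈ Finset.range N, (n.choose m : ℝ) * j.choose m
        = ∑ m ∈ Finset.range (n+1), (n.choose m : ℝ) * j.choose m := by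
    intro N hN
    symm
    refine Finset.sum_subset (Finset.range_subset_range.2 hN) fun m _ hm => ?_
    have : n < m := by simpa using hm
    simp [Nat.choose_eq_zero_of_lt this]
  rw [← big2 (n+j+1) (by omega), big (n+j+1) (by omega), h2]

lemma summable_aux {s : ℝ} (hs : 0 < s) {r : ℝ} (h0 : 0 ≤ r) (h1 : r < 1) :
    Summable (fun k : ℕ => ((k:ℝ)+1) * (poch s k / k.factorial) * r ^ k) := by
  rcases eq_or_lt_of_le h0 with h0 | h0
  · apply summable_of_ne_finset_zero (s := {0})
    intro k hk
    have hk0 : k ≠ 0 := by simpa using hk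
    simp [← h0, zero_pow hk0]
  · set f : ℕ → ℝ := fun k => ((k:ℝ)+1) * (poch s k / k.factorial) * r ^ k with hf
    have hpos : ∀ k, 0 < f k := by
      intro k
      have := poch_pos hs k
      have := k.factorial_pos
      positivity
    refine summable_of_ratio_test_tendsto_lt_one h1 (Eventually.of_forall fun k => (hpos k).ne') ?_
    have heq : ∀ k : ℕ, ‖f (k+1)‖ / ‖f k‖
        = (1 + 1/((k:ℝ)+1)) * (1 + (s-1)/((k:ℝ)+1)) * r := by
      intro k
      rw [Real.norm_of_nonneg (hpos (k+1)).le, Real.norm_of_nonneg (hpos k).le, hf]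
      simp only
      rw [poch_succ, Nat.factorial_succ]
      have h2 : (poch s k) ≠ 0 := (poch_pos hs k).ne'
      have h3 : ((k.factorial : ℝ)) ≠ 0 := Nat.cast_ne_zero.2 k.factorial_ne_zero
      have h4 : ((k:ℝ)+1) ≠ 0 := by positivity
      have h5 : r ≠ 0 := h0.ne'
      push_cast
      field_simp
      ring
    simp only [heq]
    have hlim : Tendsto (fun k : ℕ => 1/((k:ℝ)+1)) atTop (nhds 0) :=
      tendsto_one_div_add_atTop_nhds_zero_nat
    have hlim2 : Tendsto (fun k : ℕ => (s-1)/((k:ℝ)+1)) atTop (nhds 0) := by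
      have := hlim.const_mul (s-1)
      simpa [div_eq_mul_inv] using this
    have : Tendsto (fun k : ℕ => (1 + 1/((k:ℝ)+1)) * (1 + (s-1)/((k:ℝ)+1)) * r)
        atTop (nhds ((1+0) * (1+0) * r)) :=
      (((tendsto_const_nhds.add hlim).mul (tendsto_const_nhds.add hlim2)).mul tendsto_const_nhds)
    simpa using this

lemma summable_poch {s : ℝ} (hs : 0 < s) {r : ℝ} (h0 : 0 ≤ r) (h1 : r < 1) :
    Summable (fun k : ℕ => poch s k / k.factorial * r ^ k) := by
  refine Summable.of_nonneg_of_le (fun k => ?_) (fun k => ?_) (summable_aux hs h0 h1)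
  · have := poch_pos hs k; have := k.factorial_pos; positivity
  · have h2 : (0:ℝ) ≤ poch s k / k.factorial * r ^ k := by
      have := poch_pos hs k; have := k.factorial_pos; positivity
    nlinarith [h2, (by positivity : (0:ℝ) < (k:ℝ)+1)]

lemma summable_poch_mul {s : ℝ} (hs : 0 < s) {r : ℝ} (h0 : 0 ≤ r) (h1 : r < 1) :
    Summable (fun k : ℕ => (k:ℝ) * (poch s k / k.factorial) * r ^ k) := by
  refine Summable.of_nonneg_of_le (fun k => ?_) (fun k => ?_) (summable_aux hs h0 h1)
  · have := poch_pos hs k; have := k.factorial_pos; positivity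
  · have h2 : (0:ℝ) ≤ poch s k / k.factorial * r ^ k := by
      have := poch_pos hs k; have := k.factorial_pos; positivity
    nlinarith [h2]

lemma hasSum_binomial {s : ℝ} (hs : 0 < s) {t : ℝ} (ht0 : 0 < t) (ht1 : t < 1) :
    HasSum (fun k : ℕ => (-1)^k * poch s k / k.factorial * t^k) ((1+t) ^ (-s)) := by
  classical
  set c : ℕ → ℝ := fun k => (-1)^k * poch s k / k.factorial with hc
  set r : ℝ := (1+t)/2 with hr
  have hr0 : 0 < r := by rw [hr]; linarith
  have hr1 : r < 1 := by rw [hr]; linarith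
  have htr : t < r := by rw [hr]; linarith
  set U : Set ℝ := Set.Ioo (-r) r with hU
  have hUopen : IsOpen U := isOpen_Ioo
  have hUconn : IsPreconnected U := (convex_Ioo _ _).isPreconnected
  have h0U : (0:ℝ) ∈ U := ⟨by linarith, hr0⟩
  have htU : t ∈ U := ⟨by linarith, htr⟩
  have habs : ∀ k : ℕ, |c k| = poch s k / k.factorial := by
    intro k
    rw [hc]
    simp only
    rw [abs_div, abs_mul, abs_pow, abs_neg, abs_one, one_pow, one_mul,
      abs_of_pos (poch_pos hs k), Nat.abs_cast]
  -- the derivative bound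
  set u : ℕ → ℝ := fun k => poch s k / k.factorial * ((k:ℝ) * r^(k-1)) with hu
  have hu_sum : Summable u := by
    have h := (summable_poch_mul hs hr0.le hr1).mul_left (1/r)
    refine h.congr fun k => ?_
    cases k with
    | zero => simp [hu]
    | succ k =>
      rw [hu]
      simp only [Nat.add_sub_cancel]
      rw [pow_succ]
      field_simp
  -- termwise functions
  set g : ℕ → ℝ → ℝ := fun k y => c k * y^k with hg
  set g' : ℕ → ℝ → ℝ := fun k y => c k * ((k:ℝ) * y^(k-1)) with hg'
  have hgderiv : ∀ k y, y ∈ U → HasDerivAt (g k) (g' k y) y := by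
    intro k y _
    simpa [hg, hg'] using (hasDerivAt_pow k y).const_mul (c k)
  have hgbound : ∀ k y, y ∈ U → ‖g' k y‖ ≤ u k := by
    intro k y hy
    have hyr : |y| ≤ r := by
      rw [abs_le]; exact ⟨hy.1.le, hy.2.le⟩
    rw [hg', hu]
    simp only
    rw [Real.norm_eq_abs, abs_mul, habs, abs_mul, Nat.abs_cast, abs_pow]
    have : |y|^(k-1) ≤ r^(k-1) := pow_le_pow_left₀ (abs_nonneg y) hyr _
    have hp : 0 < poch s k / k.factorial := by
      have := poch_pos hs k; have := k.factorial_pos; positivity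
    apply mul_le_mul_of_nonneg_left _ hp.le
    exact mul_le_mul_of_nonneg_left this (Nat.cast_nonneg k)
  have hg0 : Summable (fun k => g k 0) := by
    apply summable_of_ne_finset_zero (s := {0})
    intro k hk
    have hk0 : k ≠ 0 := by simpa using hk
    simp [hg, zero_pow hk0]
  -- sum functions
  set Fn : ℝ → ℝ := fun y => ∑' k, g k y with hFn
  set D : ℝ → ℝ := fun y => ∑' k, g' k y with hD
  have hDeriv : ∀ y ∈ U, HasDerivAt Fn (D y) y := fun y hy =>
    hasDerivAt_tsum_of_isPreconnected hu_sum hUopen hUconn hgderiv hgbound h0U hg0 hy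
  have hFsum : ∀ y ∈ U, HasSum (fun k => g k y) (Fn y) := by
    intro y hy
    have hyr : |y| ≤ r := by rw [abs_le]; exact ⟨hy.1.le, hy.2.le⟩
    have : Summable (fun k => g k y) := by
      refine Summable.of_norm_bounded (summable_poch hs hr0.le hr1) fun k => ?_
      rw [hg]
      simp only
      rw [Real.norm_eq_abs, abs_mul, habs, abs_pow]
      have hp : 0 < poch s k / k.factorial := by
        have := poch_pos hs k; have := k.factorial_pos; positivity
      exact mul_le_mul_of_nonneg_left (pow_le_pow_left₀ (abs_nonneg y) hyr _) hp.le
    exact this.hasSum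
  have hDsum : ∀ y ∈ U, HasSum (fun k => g' k y) (D y) := by
    intro y hy
    have : Summable (fun k => g' k y) :=
      Summable.of_norm_bounded hu_sum fun k => hgbound k y hy
    exact this.hasSum
  -- the ODE : (1+y) * D y + s * Fn y = 0 on U
  have hODE : ∀ y ∈ U, (1+y) * D y + s * Fn y = 0 := by
    intro y hy
    have h1 : HasSum (fun k => g' k y) (D y) := hDsum y hy
    have h2 : HasSum (fun k => y * g' k y) (y * D y) := h1.mul_left y
    have h3 : HasSum (fun k => s * g k y) (s * Fn y) := (hFsum y hy).mul_left s
    have hcomb : HasSum (fun k => g' k y + (y * g' k y + s * g k y))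
        (D y + (y * D y + s * Fn y)) := h1.add (h2.add h3)
    -- identify with telescoping
    have hterm : ∀ k, g' k y + (y * g' k y + s * g k y) = g' k y - g' (k+1) y := by
      intro k
      rw [hg', hg, hc]
      simp only
      cases k with
      | zero =>
        norm_num [poch_zero, poch_succ]
      | succ k =>
        simp only [Nat.add_sub_cancel]
        rw [poch_succ s (k+1), Nat.factorial_succ (k+1)]
        have hfk : ((k+1).factorial : ℝ) ≠ 0 := Nat.cast_ne_zero.2 (k+1).factorial_ne_zero
        push_cast [pow_succ]
        field_simp
        ring
    rw [funext hterm] at hcomb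
    -- telescoping sum is 0
    have htel : Tendsto (fun N => ∑ k ∈ Finset.range N, (g' k y - g' (k+1) y)) atTop
        (nhds (D y + (y * D y + s * Fn y))) := hcomb.tendsto_sum_nat
    have htel2 : Tendsto (fun N => ∑ k ∈ Finset.range N, (g' k y - g' (k+1) y)) atTop
        (nhds 0) := by
      have heq : ∀ N, ∑ k ∈ Finset.range N, (g' k y - g' (k+1) y) = g' 0 y - g' N y :=
        fun N => Finset.sum_range_sub' (fun k => g' k y) N
      rw [funext heq]
      have h0 : g' 0 y = 0 := by simp [hg']
      rw [h0]
      have : Tendsto (fun N => g' N y) atTop (nhds 0) := h1.summable.tendsto_atTop_zero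
      simpa using this.const_sub 0
    have := tendsto_nhds_unique htel htel2
    linarith [this]
  -- h = Fn * (1+·)^s is constant
  set h : ℝ → ℝ := fun y => Fn y * (1+y) ^ s with hh
  have hhderiv : ∀ y ∈ U, HasDerivAt h 0 y := by
    intro y hy
    have h1y : 0 < 1 + y := by have := hy.1; simp only [hU, Set.mem_Ioo] at hy; nlinarith [hy.1, hr1]
    have hd1 : HasDerivAt (fun y : ℝ => (1+y) ^ s) (s * (1+y)^(s-1)) y := by
      have hbase : HasDerivAt (fun y : ℝ => 1 + y) 1 y := (hasDerivAt_id y).const_add 1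
      have := (Real.hasDerivAt_rpow_const (x := 1+y) (p := s) (Or.inl h1y.ne')).comp y hbase
      rw [mul_one] at this; exact this
    have := (hDeriv y hy).mul hd1
    have hzero : D y * (1+y)^s + Fn y * (s * (1+y)^(s-1)) = 0 := by
      have hsplit : (1+y)^s = (1+y)^(s-1) * (1+y) := by
        rw [← Real.rpow_add_one h1y.ne' (s-1)]
        ring_nf
      rw [hsplit]
      linear_combination ((1+y)^(s-1)) * hODE y hy
    rw [hzero] at this
    exact this
  have hconst : h t = h 0 := by
    have hcont : ContinuousOn h (Set.Icc 0 t) := by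
      intro y hy
      have hyU : y ∈ U := ⟨by linarith [hy.1], by linarith [hy.2, htr]⟩
      exact (hhderiv y hyU).continuousAt.continuousWithinAt
    have hder : ∀ y ∈ Set.Ico 0 t, HasDerivWithinAt h 0 (Set.Ici y) y := by
      intro y hy
      have hyU : y ∈ U := ⟨by linarith [hy.1], by linarith [hy.2, htr]⟩
      exact (hhderiv y hyU).hasDerivWithinAt
    exact constant_of_has_deriv_right_zero hcont hder t (Set.right_mem_Icc.2 ht0.le)
  have hF0 : Fn 0 = 1 := by
    have : HasSum (fun k => g k 0) 1 := by
      have heq : (fun k : ℕ => g k 0) = fun k => if k = 0 then (1:ℝ) else 0 := by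
        funext k
        cases k with
        | zero => simp [hg, hc, poch_zero]
        | succ k => simp [hg]
      rw [heq]
      exact hasSum_ite_eq 0 1
    exact this.tsum_eq
  have hval : Fn t * (1+t) ^ s = 1 := by
    have h2 : h 0 = 1 := by
      rw [hh]; simp [hF0, Real.one_rpow]
    exact hconst.trans h2
  have hpow : (0:ℝ) < (1+t) ^ s := Real.rpow_pos_of_pos (by linarith) s
  have hFt : Fn t = (1+t) ^ (-s) := by
    rw [Real.rpow_neg (by linarith)]
    field_simp
    linarith [hval]
  have := hFsum t htU
  rw [hFt] at this
  exact this

lemma hasSum_pfaff (n : ℕ) {t : ℝ} (ht0 : 0 < t) (ht1 : t < 1) :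
    HasSum (fun j : ℕ =>
        poch ((n:ℝ)+1) j * poch (1/2) j * (-1)^j / (j.factorial * j.factorial) * t^j)
      ((1+t) ^ (-(1:ℝ)/2) * F2F1 n (t/(1+t))) := by
  classical
  have h1t : (0:ℝ) < 1 + t := by linarith
  set C : ℕ → ℝ := fun m =>
    poch (-(n:ℝ)) m * poch (1/2) m / (poch 1 m * m.factorial) * t^m with hC
  set w : ℕ → ℕ → ℝ := fun m j =>
    if m ≤ j then C m * ((-1)^(j-m) * poch (1/2 + m) (j-m) / (j-m).factorial * t^(j-m))
    else 0 with hw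
  -- each w m sums to the m-th term of the finite sum
  have hwm : ∀ m, HasSum (w m)
      ((1+t) ^ (-(1:ℝ)/2) *
        (poch (-(n:ℝ)) m * poch (1/2) m / (poch 1 m * m.factorial) * (t/(1+t))^m)) := by
    intro m
    have hs : (0:ℝ) < 1/2 + m := by positivity
    have hbin := (hasSum_binomial hs ht0 ht1).mul_left (C m)
    -- value identification
    have hval : C m * (1+t) ^ (-(1/2 + (m:ℝ))) =
        (1+t) ^ (-(1:ℝ)/2) *
          (poch (-(n:ℝ)) m * poch (1/2) m / (poch 1 m * m.factorial) * (t/(1+t))^m) := by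
      rw [hC]
      simp only
      rw [div_pow]
      have hsplit : (1+t) ^ (-(1/2 + (m:ℝ))) = (1+t) ^ (-(1:ℝ)/2) * ((1+t)^m)⁻¹ := by
        rw [show (-(1/2 + (m:ℝ))) = (-(1:ℝ)/2) + (-(m:ℝ)) by ring, Real.rpow_add h1t,
          Real.rpow_neg h1t.le, Real.rpow_natCast]
      rw [hsplit]
      have h1 : ((1+t):ℝ)^m ≠ 0 := pow_ne_zero _ h1t.ne'
      field_simp
    rw [hval] at hbin
    -- reindex along k ↦ k + m
    have hinj : Function.Injective (fun k : ℕ => k + m) := add_left_injective m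
    have hzero : ∀ j, j ∉ Set.range (fun k : ℕ => k + m) → w m j = 0 := by
      intro j hj
      have : ¬ m ≤ j := by
        intro hmj
        exact hj ⟨j - m, Nat.sub_add_cancel hmj⟩
      simp [hw, this]
    have hcomp : (w m) ∘ (fun k : ℕ => k + m) = fun k => C m * ((-1)^k * poch (1/2 + m) k / k.factorial * t^k) := by
      funext k
      simp only [Function.comp_apply, hw, if_pos (Nat.le_add_left m k), Nat.add_sub_cancel]
    rw [← Function.Injective.hasSum_iff hinj hzero, hcomp]
    exact hbin
  -- sum over m
  have hsum := hasSum_sum (s := Finset.range (n+1)) (f := fun m j => w m j)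
    (a := fun m => (1+t) ^ (-(1:ℝ)/2) *
        (poch (-(n:ℝ)) m * poch (1/2) m / (poch 1 m * m.factorial) * (t/(1+t))^m))
    (fun m _ => hwm m)
  have hrhs : ∑ m ∈ Finset.range (n+1), (1+t) ^ (-(1:ℝ)/2) *
        (poch (-(n:ℝ)) m * poch (1/2) m / (poch 1 m * m.factorial) * (t/(1+t))^m)
      = (1+t) ^ (-(1:ℝ)/2) * F2F1 n (t/(1+t)) := by
    rw [F2F1, Finset.mul_sum]
  rw [hrhs] at hsum
  -- identify the terms
  have hterm : ∀ j, ∑ m ∈ Finset.range (n+1), w m j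
      = poch ((n:ℝ)+1) j * poch (1/2) j * (-1)^j / (j.factorial * j.factorial) * t^j := by
    intro j
    have hstep : ∀ m ∈ Finset.range (n+1), w m j
        = (n.choose m : ℝ) * (j.choose m) * (poch (1/2) j * (-1)^j / (j.factorial : ℝ) * t^j) := by
      intro m hm
      have hmn : m ≤ n := Nat.lt_succ_iff.mp (Finset.mem_range.mp hm)
      by_cases hmj : m ≤ j
      · rw [hw]
        simp only [if_pos hmj]
        rw [hC]
        simp only
        rw [poch_neg_nat hmn, poch_one]
        have hpoch : poch (1/2) m * poch (1/2 + m) (j-m) = poch (1/2) j := by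
          rw [← poch_add]
          congr 1
          omega
        have hfact : (j.choose m : ℝ) * m.factorial * (j-m).factorial = j.factorial := by
          exact_mod_cast congrArg (Nat.cast : ℕ → ℝ)
            (Nat.choose_mul_factorial_mul_factorial hmj)
        have hsign : ((-1:ℝ))^m * (-1)^(j-m) = (-1)^j := by
          rw [← pow_add]
          congr 1
          omega
        have htpow : t^m * t^(j-m) = t^j := by
          rw [← pow_add]
          congr 1
          omega
        have hm0 : ((m.factorial : ℝ)) ≠ 0 := Nat.cast_ne_zero.2 m.factorial_ne_zero
        have hjm0 : (((j-m).factorial : ℝ)) ≠ 0 := Nat.cast_ne_zero.2 (j-m).factorial_ne_zero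
        have hj0 : ((j.factorial : ℝ)) ≠ 0 := Nat.cast_ne_zero.2 j.factorial_ne_zero
        have expand : (j.choose m : ℝ) = j.factorial / (m.factorial * (j-m).factorial) := by
          rw [eq_div_iff (mul_ne_zero hm0 hjm0), ← mul_assoc]; exact hfact
        rw [expand, ← hpoch, ← hsign, ← htpow]
        field_simp
      · rw [hw]
        simp only [if_neg hmj]
        rw [Nat.choose_eq_zero_of_lt (by omega : j < m)]
        simp
    rw [Finset.sum_congr rfl hstep, ← Finset.sum_mul, vandermonde_real n j,
      choose_eq_poch n j]
    have hj0 : ((j.factorial : ℝ)) ≠ 0 := Nat.cast_ne_zero.2 j.factorial_ne_zero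
    field_simp
  exact (funext hterm : (fun j => ∑ m ∈ Finset.range (n+1), w m j) = _) ▸ hsum

theorem stmt17 (n : ℕ) (x : ℝ) (hx0 : 0 < x) (hx1 : x < 1) :
    HasSum (fun j : ℕ =>
        (Nat.choose (n + j) j : ℝ) * ((-1 : ℝ) ^ j * poch (1/2) j) /
          ((2 * ((n : ℝ) + (j : ℝ)) + 1) * (Nat.factorial j : ℝ)) * x ^ j)
      (1 / (2 * x ^ ((n : ℝ) + 1/2)) *
        ∫ t in (0:ℝ)..x,
          t ^ ((n : ℝ) - 1/2) * (1 + t) ^ (-(1:ℝ)/2) * F2F1 n (t / (1 + t))) := by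
  classical
  set e : ℕ → ℝ := fun j =>
    poch ((n:ℝ)+1) j * poch (1/2) j * (-1)^j / (j.factorial * j.factorial) with he
  have hν1 : ∀ j : ℕ, -1 < (n:ℝ) + j - 1/2 := by
    intro j
    have : (0:ℝ) ≤ (n:ℝ) + j := by positivity
    linarith
  have hν2 : ∀ j : ℕ, (1:ℝ)/2 ≤ (n:ℝ) + j - 1/2 + 1 := by
    intro j
    have : (0:ℝ) ≤ (n:ℝ) + j := by positivity
    linarith
  set μ : Measure ℝ := volume.restrict (Set.Ioc 0 x) with hμ
  set F : ℕ → ℝ → ℝ := fun j t => e j * t ^ ((n:ℝ) + j - 1/2) with hF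
  -- integrability
  have hF_int : ∀ j, Integrable (F j) μ := by
    intro j
    have h1 : IntervalIntegrable (fun t : ℝ => t ^ ((n:ℝ) + j - 1/2)) volume 0 x :=
      intervalIntegrable_rpow' (hν1 j)
    have h2 : IntervalIntegrable (F j) volume 0 x := by
      simpa [hF, mul_comm] using h1.const_mul (e j)
    exact h2.1
  -- the basic integral computation
  have hint : ∀ j : ℕ, ∫ t in Set.Ioc (0:ℝ) x, t ^ ((n:ℝ) + j - 1/2)
      = x ^ ((n:ℝ) + j - 1/2 + 1) / ((n:ℝ) + j - 1/2 + 1) := by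
    intro j
    rw [← intervalIntegral.integral_of_le hx0.le]
    rw [integral_rpow (Or.inl (hν1 j))]
    rw [Real.zero_rpow (ne_of_gt (by linarith [hν2 j]))]
    ring
  -- bound on |e j| * x^j
  have hebound : ∀ j, |e j| ≤ poch ((n:ℝ)+1) j / j.factorial := by
    intro j
    rw [he]
    simp only
    rw [abs_div, abs_mul, abs_mul, abs_pow, abs_neg, abs_one, one_pow, mul_one,
      abs_of_nonneg (poch_nonneg (by positivity) j),
      abs_of_nonneg (poch_nonneg (by norm_num) j), abs_mul, Nat.abs_cast]
    have hp2 : poch (1/2) j ≤ j.factorial := by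
      have := poch_le_poch (by norm_num : (0:ℝ) ≤ 1/2) (by norm_num : (1:ℝ)/2 ≤ 1) j
      rwa [poch_one] at this
    have hj0 : (0:ℝ) < j.factorial := by exact_mod_cast j.factorial_pos
    have hp1 : 0 ≤ poch ((n:ℝ)+1) j := poch_nonneg (by positivity) j
    rw [div_le_div_iff₀ (by positivity) hj0]
    calc poch ((n:ℝ)+1) j * poch (1/2) j * j.factorial
        ≤ poch ((n:ℝ)+1) j * j.factorial * j.factorial := by
          nlinarith [mul_le_mul_of_nonneg_left (mul_le_mul_of_nonneg_right hp2 hj0.le) hp1]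
      _ = poch ((n:ℝ)+1) j * (j.factorial * j.factorial) := by ring
  -- summability of integral norms
  have hF_sum : Summable (fun j => ∫ t, ‖F j t‖ ∂μ) := by
    have hmaj : Summable (fun j : ℕ => 2 * x ^ ((n:ℝ) + 1/2) *
        (poch ((n:ℝ)+1) j / j.factorial * x ^ j)) :=
      (summable_poch (by positivity : (0:ℝ) < (n:ℝ)+1) hx0.le hx1).mul_left _
    refine Summable.of_nonneg_of_le (fun j => ?_) (fun j => ?_) hmaj
    · positivity
    · have hnorm : ∫ t, ‖F j t‖ ∂μ = |e j| * (x ^ ((n:ℝ) + j - 1/2 + 1) / ((n:ℝ) + j - 1/2 + 1)) := by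
        rw [hμ, ← hint j, ← MeasureTheory.integral_const_mul]
        refine setIntegral_congr_fun measurableSet_Ioc fun t ht => ?_
        rw [hF]
        simp only
        rw [norm_mul, Real.norm_eq_abs, Real.norm_eq_abs,
          abs_of_nonneg (Real.rpow_nonneg ht.1.le _)]
      rw [hnorm]
      have hxpow : x ^ ((n:ℝ) + j - 1/2 + 1) = x ^ ((n:ℝ) + 1/2) * x ^ j := by
        rw [← Real.rpow_natCast x j, ← Real.rpow_add hx0]
        congr 1
        ring
      have h1 : x ^ ((n:ℝ) + j - 1/2 + 1) / ((n:ℝ) + j - 1/2 + 1)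
          ≤ 2 * x ^ ((n:ℝ) + j - 1/2 + 1) := by
        rw [div_le_iff₀ (by linarith [hν2 j])]
        have hp : (0:ℝ) ≤ x ^ ((n:ℝ) + j - 1/2 + 1) := Real.rpow_nonneg hx0.le _
        nlinarith [hν2 j]
      have he0 : 0 ≤ |e j| := abs_nonneg _
      calc |e j| * (x ^ ((n:ℝ) + j - 1/2 + 1) / ((n:ℝ) + j - 1/2 + 1))
          ≤ |e j| * (2 * x ^ ((n:ℝ) + j - 1/2 + 1)) :=
            mul_le_mul_of_nonneg_left h1 he0
        _ = 2 * x ^ ((n:ℝ)+1/2) * (|e j| * x ^ j) := by rw [hxpow]; ring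
        _ ≤ 2 * x ^ ((n:ℝ)+1/2) * (poch ((n:ℝ)+1) j / j.factorial * x ^ j) := by
            have : (0:ℝ) ≤ 2 * x ^ ((n:ℝ)+1/2) := by positivity
            apply mul_le_mul_of_nonneg_left _ this
            exact mul_le_mul_of_nonneg_right (hebound j) (by positivity)
  -- the main exchange
  have H := MeasureTheory.hasSum_integral_of_summable_integral_norm hF_int hF_sum
  -- identify the integral of the sum
  have hid : ∫ t, (∑' j, F j t) ∂μ
      = ∫ t in Set.Ioc (0:ℝ) x, t ^ ((n : ℝ) - 1/2) * (1 + t) ^ (-(1:ℝ)/2) * F2F1 n (t / (1 + t)) := by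
    rw [hμ]
    refine setIntegral_congr_fun measurableSet_Ioc fun t ht => ?_
    have ht0 : 0 < t := ht.1
    have ht1 : t < 1 := lt_of_le_of_lt ht.2 hx1
    have hps := (hasSum_pfaff n ht0 ht1).mul_left (t ^ ((n:ℝ) - 1/2))
    have heq : (fun j => t ^ ((n:ℝ) - 1/2) * (e j * t ^ j)) = fun j => F j t := by
      funext j
      rw [hF]
      simp only
      rw [← Real.rpow_natCast t j, ← mul_assoc, mul_comm (t ^ ((n:ℝ)-1/2)) (e j), mul_assoc,
        ← Real.rpow_add ht0]
      congr 2
      ring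
    rw [show (fun j => t ^ ((n:ℝ) - 1/2) * (poch ((n:ℝ)+1) j * poch (1/2) j * (-1)^j /
        ((j.factorial : ℝ) * j.factorial) * t^j)) = fun j => F j t from heq] at hps
    rw [hps.tsum_eq, mul_assoc]
  rw [hid] at H
  -- compute each term integral
  have hterm : ∀ j : ℕ, ∫ t, F j t ∂μ
      = e j * (x ^ ((n:ℝ) + j - 1/2 + 1) / ((n:ℝ) + j - 1/2 + 1)) := by
    intro j
    rw [hμ, hF]
    simp only
    rw [MeasureTheory.integral_const_mul, hint j]
  -- multiply by the constant
  have H2 := (H.mul_left (1 / (2 * x ^ ((n:ℝ) + 1/2))))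
  rw [← intervalIntegral.integral_of_le hx0.le] at H2
  -- final identification of terms
  have hfin : (fun j => 1 / (2 * x ^ ((n:ℝ) + 1/2)) * ∫ t, F j t ∂μ)
      = fun j : ℕ => (Nat.choose (n + j) j : ℝ) * ((-1 : ℝ) ^ j * poch (1/2) j) /
          ((2 * ((n : ℝ) + (j : ℝ)) + 1) * (Nat.factorial j : ℝ)) * x ^ j := by
    funext j
    rw [hterm j, choose_eq_poch n j, he]
    simp only
    have hxpow : x ^ ((n:ℝ) + j - 1/2 + 1) = x ^ ((n:ℝ) + 1/2) * x ^ j := by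
      rw [← Real.rpow_natCast x j, ← Real.rpow_add hx0]
      congr 1
      ring
    have hνval : (n:ℝ) + j - 1/2 + 1 = (n:ℝ) + j + 1/2 := by ring
    rw [hxpow, hνval]
    have h2 : (2 * ((n:ℝ) + j) + 1) = 2 * ((n:ℝ) + j + 1/2) := by ring
    have hj0 : ((j.factorial : ℝ)) ≠ 0 := Nat.cast_ne_zero.2 j.factorial_ne_zero
    have hxp : x ^ ((n:ℝ)+1/2) ≠ 0 := (Real.rpow_pos_of_pos hx0 _).ne'
    have hd : ((n:ℝ) + j + 1/2) ≠ 0 := by positivity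
    rw [h2]
    field_simp
  rw [hfin] at H2
  exact H2
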